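/- Let α, β, θ, γ > 0 with α < β, and let x₀ > 0. Set t₂ = θ^{−1} log((α − β − θx₀)/(α − β)) (which is positive and finite). Then the function x defined by x(t) = (x₀ − (α − β)/θ)·e^{−θt} + (α − β)/θ for t ∈ [0, t₂] and x(t) = ((α − β)/γ)·(1 − e^{−γ(t − t₂)}) for t ≥ t₂ is continuous, satisfies x(t₂) = 0 with x(t) > 0 for t < t₂, and solves the fluid equation x(t) = x₀ + (α − β)t − θ∫₀ᵗ x⁺(s) ds + γ∫₀ᵗ x⁻(s) ds for all t ≥ 0. -/

import Mathlib

set_option maxHeartbeats 2000000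


lemma exp_int' (θ a b : ℝ) (hθ : θ ≠ 0) :
    ∫ s in a..b, Real.exp (-(θ * s)) = θ⁻¹ * (Real.exp (-(θ * a)) - Real.exp (-(θ * b))) := by
  have h : ∀ s ∈ Set.uIcc a b,
      HasDerivAt (fun u => -θ⁻¹ * Real.exp (-(θ * u))) (Real.exp (-(θ * s))) s := by
    intro s _
    have h1 : HasDerivAt (fun u : ℝ => -(θ * u)) (-θ) s := by
      simpa using ((hasDerivAt_id s).const_mul θ).fun_neg
    have h2 := (Real.hasDerivAt_exp (-(θ * s))).comp s h1
    have h3 := h2.const_mul (-θ⁻¹)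
    refine h3.congr_deriv ?_
    have h4 : θ⁻¹ * θ = 1 := inv_mul_cancel₀ hθ
    linear_combination (Real.exp (-(θ * s))) * h4
  have hint : IntervalIntegrable (fun s => Real.exp (-(θ * s))) MeasureTheory.volume a b :=
    Continuous.intervalIntegrable (by fun_prop) a b
  rw [intervalIntegral.integral_eq_sub_of_hasDerivAt h hint]
  ring



/-- `x : ℝ → ℝ`, viewed as a function on `[0,∞)`, is a continuous solution of the fluid
equation `x(t) = x₀ + (α - β)t - θ∫₀ᵗ x⁺(s) ds + γ∫₀ᵗ x⁻(s) ds` for `t ≥ 0`. -/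
def IsFluidSolution (α β θ γ x₀ : ℝ) (x : ℝ → ℝ) : Prop :=
  ContinuousOn x (Set.Ici 0) ∧
    ∀ t : ℝ, 0 ≤ t →
      x t = x₀ + (α - β) * t - θ * (∫ s in (0:ℝ)..t, max (x s) 0)
        + γ * (∫ s in (0:ℝ)..t, max (-x s) 0)

/-- For `α < β` and `x₀ > 0`, with
`t₂ = θ⁻¹ log((α - β - θx₀)/(α - β)) > 0`, the piecewise function
`x(t) = (x₀ - (α - β)/θ)·e^{-θt} + (α - β)/θ` on `[0, t₂]` and
`x(t) = ((α - β)/γ)·(1 - e^{-γ(t - t₂)})` for `t ≥ t₂` is continuous, vanishes at `t₂`,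
is positive on `[0, t₂)`, and solves the fluid equation. -/
theorem stmt_10 (α β θ γ x₀ t₂ : ℝ) (hα : 0 < α) (hβ : 0 < β) (hθ : 0 < θ) (hγ : 0 < γ)
    (hαβ : α < β) (hx₀ : 0 < x₀)
    (ht₂ : t₂ = θ⁻¹ * Real.log ((α - β - θ * x₀) / (α - β)))
    (x : ℝ → ℝ)
    (hx : ∀ t : ℝ, x t =
      if t ≤ t₂ then (x₀ - (α - β) / θ) * Real.exp (-(θ * t)) + (α - β) / θ
      else (α - β) / γ * (1 - Real.exp (-(γ * (t - t₂))))) :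
    0 < t₂ ∧ ContinuousOn x (Set.Ici 0) ∧ x t₂ = 0 ∧
      (∀ t : ℝ, 0 ≤ t → t < t₂ → 0 < x t) ∧ IsFluidSolution α β θ γ x₀ x := by
  have hθ' : θ ≠ 0 := ne_of_gt hθ
  have hγ' : γ ≠ 0 := ne_of_gt hγ
  have hab : α - β < 0 := by linarith
  have hab' : α - β ≠ 0 := ne_of_lt hab
  have hden : α - β - θ * x₀ < 0 := by nlinarith
  have hden' : α - β - θ * x₀ ≠ 0 := ne_of_lt hden
  have harg : 1 < (α - β - θ * x₀) / (α - β) := by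
    rw [lt_div_iff_of_neg hab]; nlinarith
  have hargpos : 0 < (α - β - θ * x₀) / (α - β) := by linarith
  have ht₂pos : 0 < t₂ := by
    rw [ht₂]; exact mul_pos (inv_pos.mpr hθ) (Real.log_pos harg)
  have hEexp : Real.exp (θ * t₂) = (α - β - θ * x₀) / (α - β) := by
    rw [ht₂, ← mul_assoc, mul_inv_cancel₀ hθ', one_mul, Real.exp_log hargpos]
  have hEval : Real.exp (-(θ * t₂)) = (α - β) / (α - β - θ * x₀) := by
    rw [Real.exp_neg, hEexp, inv_div]
  have hE : (x₀ - (α - β) / θ) * Real.exp (-(θ * t₂)) = -((α - β) / θ) := by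
    rw [hEval]
    have h3 : (α - β - θ * x₀) * (α - β - θ * x₀)⁻¹ = 1 := mul_inv_cancel₀ hden'
    have h4 : θ * θ⁻¹ = 1 := mul_inv_cancel₀ hθ'
    linear_combination (-(α - β) * θ⁻¹) * h3 + (-x₀ * (α - β) * (α - β - θ * x₀)⁻¹) * h4
  have hx1 : ∀ s : ℝ, s ≤ t₂ →
      x s = (x₀ - (α - β) / θ) * Real.exp (-(θ * s)) + (α - β) / θ := by
    intro s hs; rw [hx s, if_pos hs]
  have hx2 : ∀ s : ℝ, t₂ ≤ s →
      x s = (α - β) / γ * (1 - Real.exp (-(γ * (s - t₂)))) := by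
    intro s hs
    rcases eq_or_lt_of_le hs with h | h
    · rw [← h, hx t₂, if_pos le_rfl]; simp; linarith [hE]
    · rw [hx s, if_neg (not_le.mpr h)]
  have hxt₂ : x t₂ = 0 := by rw [hx1 t₂ le_rfl]; linarith [hE]
  have hA : 0 < x₀ - (α - β) / θ := by
    have : (α - β) / θ < 0 := div_neg_of_neg_of_pos hab hθ
    linarith
  have hpos : ∀ t : ℝ, 0 ≤ t → t < t₂ → 0 < x t := by
    intro t ht htlt
    rw [hx1 t (le_of_lt htlt)]
    have hlt : Real.exp (-(θ * t₂)) < Real.exp (-(θ * t)) :=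
      Real.exp_lt_exp.mpr (by nlinarith)
    nlinarith [hE]
  have hnonneg : ∀ s : ℝ, s ≤ t₂ → 0 ≤ x s := by
    intro s hs
    rw [hx1 s hs]
    have hle : Real.exp (-(θ * t₂)) ≤ Real.exp (-(θ * s)) :=
      Real.exp_le_exp.mpr (by nlinarith)
    nlinarith [hE]
  have hnonpos : ∀ s : ℝ, t₂ ≤ s → x s ≤ 0 := by
    intro s hs
    rw [hx2 s hs]
    have h1 : Real.exp (-(γ * (s - t₂))) ≤ 1 := Real.exp_le_one_iff.mpr (by nlinarith)
    have h2 : (α - β) / γ < 0 := div_neg_of_neg_of_pos hab hγ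
    nlinarith
  have hxeq : x = fun t => if t ≤ t₂ then (x₀ - (α - β) / θ) * Real.exp (-(θ * t)) + (α - β) / θ
      else (α - β) / γ * (1 - Real.exp (-(γ * (t - t₂)))) := funext hx
  have hcont : Continuous x := by
    rw [hxeq]
    apply Continuous.if_le
    · fun_prop
    · fun_prop
    · exact continuous_id
    · exact continuous_const
    · intro a ha
      subst ha
      simp only [sub_self, mul_zero, neg_zero, Real.exp_zero]
      linarith [hE]
  have hcp : Continuous fun s => max (x s) 0 := hcont.max continuous_const
  have hcm : Continuous fun s => max (-x s) 0 := hcont.neg.max continuous_const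
  have hint1 : ∀ a b : ℝ, IntervalIntegrable
      (fun s => (x₀ - (α - β) / θ) * Real.exp (-(θ * s))) MeasureTheory.volume a b :=
    fun a b => Continuous.intervalIntegrable (by fun_prop) a b
  have hint3 : ∀ a b : ℝ, IntervalIntegrable
      (fun s => (α - β) / γ * (Real.exp (γ * t₂) * Real.exp (-(γ * s))))
      MeasureTheory.volume a b :=
    fun a b => Continuous.intervalIntegrable (by fun_prop) a b
  refine ⟨ht₂pos, hcont.continuousOn, hxt₂, hpos, hcont.continuousOn, ?_⟩
  intro t ht
  rcases le_or_gt t t₂ with htle | htgt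
  · -- t ≤ t₂
    have h1 : (∫ s in (0:ℝ)..t, max (x s) 0)
        = ∫ s in (0:ℝ)..t, ((x₀ - (α - β) / θ) * Real.exp (-(θ * s)) + (α - β) / θ) := by
      apply intervalIntegral.integral_congr
      intro s hs
      dsimp only
      rw [Set.uIcc_of_le ht] at hs
      have hs2 : s ≤ t₂ := le_trans hs.2 htle
      rw [max_eq_left (hnonneg s hs2), hx1 s hs2]
    have h2 : (∫ s in (0:ℝ)..t, max (-x s) 0) = 0 := by
      rw [show (∫ s in (0:ℝ)..t, max (-x s) 0) = ∫ s in (0:ℝ)..t, (0:ℝ) from ?_,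
        intervalIntegral.integral_zero]
      apply intervalIntegral.integral_congr
      intro s hs
      dsimp only
      rw [Set.uIcc_of_le ht] at hs
      have hs2 : s ≤ t₂ := le_trans hs.2 htle
      exact max_eq_right (by linarith [hnonneg s hs2])
    rw [h1, h2, intervalIntegral.integral_add (hint1 0 t) (intervalIntegrable_const),
      intervalIntegral.integral_const_mul, exp_int' θ 0 t hθ',
      intervalIntegral.integral_const, hx1 t htle]
    simp only [mul_zero, neg_zero, Real.exp_zero, smul_eq_mul, sub_zero]
    field_simp
    ring
  · -- t > t₂
    have hsplit1 : (∫ s in (0:ℝ)..t, max (x s) 0)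
        = (∫ s in (0:ℝ)..t₂, max (x s) 0) + ∫ s in t₂..t, max (x s) 0 :=
      (intervalIntegral.integral_add_adjacent_intervals (hcp.intervalIntegrable 0 t₂)
        (hcp.intervalIntegrable t₂ t)).symm
    have hsplit2 : (∫ s in (0:ℝ)..t, max (-x s) 0)
        = (∫ s in (0:ℝ)..t₂, max (-x s) 0) + ∫ s in t₂..t, max (-x s) 0 :=
      (intervalIntegral.integral_add_adjacent_intervals (hcm.intervalIntegrable 0 t₂)
        (hcm.intervalIntegrable t₂ t)).symm
    have hI1 : (∫ s in (0:ℝ)..t₂, max (x s) 0)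
        = ∫ s in (0:ℝ)..t₂, ((x₀ - (α - β) / θ) * Real.exp (-(θ * s)) + (α - β) / θ) := by
      apply intervalIntegral.integral_congr
      intro s hs
      dsimp only
      rw [Set.uIcc_of_le (le_of_lt ht₂pos)] at hs
      rw [max_eq_left (hnonneg s hs.2), hx1 s hs.2]
    have hI2 : (∫ s in t₂..t, max (x s) 0) = 0 := by
      rw [show (∫ s in t₂..t, max (x s) 0) = ∫ s in t₂..t, (0:ℝ) from ?_,
        intervalIntegral.integral_zero]
      apply intervalIntegral.integral_congr
      intro s hs
      dsimp only
      rw [Set.uIcc_of_le (le_of_lt htgt)] at hs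
      exact max_eq_right (hnonpos s hs.1)
    have hI3 : (∫ s in (0:ℝ)..t₂, max (-x s) 0) = 0 := by
      rw [show (∫ s in (0:ℝ)..t₂, max (-x s) 0) = ∫ s in (0:ℝ)..t₂, (0:ℝ) from ?_,
        intervalIntegral.integral_zero]
      apply intervalIntegral.integral_congr
      intro s hs
      dsimp only
      rw [Set.uIcc_of_le (le_of_lt ht₂pos)] at hs
      exact max_eq_right (by linarith [hnonneg s hs.2])
    have hI4 : (∫ s in t₂..t, max (-x s) 0)
        = ∫ s in t₂..t, (-((α - β) / γ)
            + (α - β) / γ * (Real.exp (γ * t₂) * Real.exp (-(γ * s)))) := by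
      apply intervalIntegral.integral_congr
      intro s hs
      dsimp only
      rw [Set.uIcc_of_le (le_of_lt htgt)] at hs
      have h0 := hnonpos s hs.1
      rw [max_eq_left (by linarith), hx2 s hs.1, ← Real.exp_add,
        show γ * t₂ + -(γ * s) = -(γ * (s - t₂)) by ring]
      ring
    rw [hsplit1, hsplit2, hI1, hI2, hI3, hI4,
      intervalIntegral.integral_add (hint1 0 t₂) (intervalIntegrable_const),
      intervalIntegral.integral_add (intervalIntegrable_const) (hint3 t₂ t),
      intervalIntegral.integral_const_mul, intervalIntegral.integral_const_mul,
      intervalIntegral.integral_const_mul,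
      exp_int' θ 0 t₂ hθ', exp_int' γ t₂ t hγ',
      intervalIntegral.integral_const, intervalIntegral.integral_const,
      hx2 t (le_of_lt htgt)]
    have hsplitexp : Real.exp (-(γ * (t - t₂))) = Real.exp (γ * t₂) * Real.exp (-(γ * t)) := by
      rw [← Real.exp_add]; congr 1; ring
    have hPQ : Real.exp (γ * t₂) = (Real.exp (-(γ * t₂)))⁻¹ := by
      rw [← Real.exp_neg]; congr 1; ring
    rw [hsplitexp, hPQ, hEval]
    simp only [mul_zero, neg_zero, Real.exp_zero, smul_eq_mul, sub_zero]
    have hexp1 : Real.exp (-(γ * t₂)) ≠ 0 := Real.exp_ne_zero _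
    have hexp2 : Real.exp (-(γ * t)) ≠ 0 := Real.exp_ne_zero _
    field_simp
    have h3 : (α - β - θ * x₀) * (α - β - θ * x₀)⁻¹ = 1 := mul_inv_cancel₀ hden'
    linear_combination γ * Real.exp (-(γ * t₂)) * (α - β) * h3
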